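/- For the ideal a = (x^a y, x y^b) with a, b ≥ 2 and the bounded face Q of P_a joining (a,1) and (1,b): with L_Q(x,y) = ((b-1)x + (a-1)y)/(ab-1), the set R_Q is exactly {-((b-1)i + (a-1)j)/(ab-1) : 1 ≤ i ≤ a, 1 ≤ j ≤ b}. -/

import Mathlib

open Set

namespace BS

def toR {n : ℕ} (u : Fin n → ℤ) : Fin n → ℝ := fun i => (u i : ℝ)

def natR {n : ℕ} (u : Fin n → ℕ) : Fin n → ℝ := fun i => (u i : ℝ)

def natZ {n : ℕ} (u : Fin n → ℕ) : Fin n → ℤ := fun i => (u i : ℤ)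

/-- `Γ` is the exponent set of a nonzero monomial ideal. -/
def IsMonIdeal {n : ℕ} (Γ : Set (Fin n → ℕ)) : Prop :=
  Γ.Nonempty ∧ ∀ u ∈ Γ, ∀ w : Fin n → ℕ, u + w ∈ Γ

/-- The Newton polyhedron: convex hull of the exponent set. -/
def newton {n : ℕ} (Γ : Set (Fin n → ℕ)) : Set (Fin n → ℝ) :=
  convexHull ℝ (natR '' Γ)

/-- The subsemigroup (containing 0) of ℤⁿ generated by differences u - v,
u ∈ Γ, v ∈ Γ ∩ Q. -/
def diffMonoid {n : ℕ} (Γ : Set (Fin n → ℕ)) (Q : Set (Fin n → ℝ)) :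
    AddSubmonoid (Fin n → ℤ) :=
  AddSubmonoid.closure {d | ∃ u ∈ Γ, ∃ v ∈ Γ, natR v ∈ Q ∧ d = natZ u - natZ v}

/-- M_Q : the translate by e = (1,...,1) of the difference semigroup. -/
def MQ {n : ℕ} (Γ : Set (Fin n → ℕ)) (Q : Set (Fin n → ℝ)) : Set (Fin n → ℤ) :=
  {m | m - 1 ∈ diffMonoid Γ Q}

/-- M_Q^{(k)} = k·v₀ + M_Q. -/
def MQk {n : ℕ} (Γ : Set (Fin n → ℕ)) (Q : Set (Fin n → ℝ)) (v0 : Fin n → ℕ) (k : ℕ) :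
    Set (Fin n → ℤ) :=
  {m | m - (k : ℤ) • natZ v0 ∈ MQ Γ Q}

/-- V_Q : linear span of the face Q. -/
def VQ {n : ℕ} (Q : Set (Fin n → ℝ)) : Submodule ℝ (Fin n → ℝ) := Submodule.span ℝ Q

/-- R_Q = { -L_Q(u) : u ∈ (M_Q \ M_Q') ∩ V_Q }. -/
def RQ {n : ℕ} (Γ : Set (Fin n → ℕ)) (Q : Set (Fin n → ℝ)) (v0 : Fin n → ℕ)
    (L : (Fin n → ℝ) →ₗ[ℝ] ℝ) : Set ℝ :=
  {x | ∃ u ∈ MQ Γ Q \ MQk Γ Q v0 1, toR u ∈ VQ Q ∧ x = - L (toR u)}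

/-- Q is contained in some coordinate hyperplane. -/
def InCoordHyp {n : ℕ} (Q : Set (Fin n → ℝ)) : Prop := ∃ i, ∀ q ∈ Q, q i = 0

/-- The subgroup G_Q of ℤⁿ generated by differences of elements of Γ ∩ Q. -/
def diffGroup {n : ℕ} (Γ : Set (Fin n → ℕ)) (Q : Set (Fin n → ℝ)) :
    AddSubgroup (Fin n → ℤ) :=
  AddSubgroup.closure
    {d | ∃ u ∈ Γ, natR u ∈ Q ∧ ∃ v ∈ Γ, natR v ∈ Q ∧ d = natZ u - natZ v}

end BS

namespace BSAux

def Gam (a b : ℕ) : Set (Fin 2 → ℕ) :=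
  {u : Fin 2 → ℕ | (a ≤ u 0 ∧ 1 ≤ u 1) ∨ (1 ≤ u 0 ∧ b ≤ u 1)}

def Qs (a b : ℕ) : Set (Fin 2 → ℝ) := segment ℝ ![(a : ℝ), 1] ![1, (b : ℝ)]

def vv (a b : ℕ) : Fin 2 → ℤ := ![(a : ℤ) - 1, 1 - (b : ℤ)]

lemma natR_pair (p q : ℕ) : BS.natR ![p, q] = ![(p : ℝ), (q : ℝ)] := by
  funext i; fin_cases i <;> simp [BS.natR]

lemma e1_mem (a b : ℕ) : BS.natR ![a, 1] ∈ Qs a b := by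
  rw [show BS.natR ![a, 1] = ![(a : ℝ), 1] by rw [natR_pair]; norm_num]
  exact left_mem_segment ℝ _ _

lemma e2_mem (a b : ℕ) : BS.natR ![1, b] ∈ Qs a b := by
  rw [show BS.natR ![1, b] = ![1, (b : ℝ)] by rw [natR_pair]; norm_num]
  exact right_mem_segment ℝ _ _

lemma gammaQ (a b : ℕ) (ha : 2 ≤ a) (hb : 2 ≤ b) (v : Fin 2 → ℕ)
    (hv : v ∈ Gam a b) (hQ : BS.natR v ∈ Qs a b) : v = ![a, 1] ∨ v = ![1, b] := by
  obtain ⟨c, d, hc, hd, hcd, heq⟩ := hQ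
  have h0 : (v 0 : ℝ) = c * a + d := by
    have := congrFun heq 0
    simp [BS.natR, Pi.add_apply, Pi.smul_apply, smul_eq_mul] at this
    linarith
  have h1 : (v 1 : ℝ) = c + d * b := by
    have := congrFun heq 1
    simp [BS.natR, Pi.add_apply, Pi.smul_apply, smul_eq_mul] at this
    linarith
  have ha2 : (2 : ℝ) ≤ (a : ℝ) := by exact_mod_cast ha
  have hb2 : (2 : ℝ) ≤ (b : ℝ) := by exact_mod_cast hb
  rcases hv with ⟨hva, _⟩ | ⟨_, hvb⟩
  · left
    have hva' : (a : ℝ) ≤ (v 0 : ℝ) := by exact_mod_cast hva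
    have hc1 : c = 1 := by nlinarith
    have hd0 : d = 0 := by linarith
    have hv0 : (v 0 : ℝ) = (a : ℝ) := by rw [h0, hc1, hd0]; ring
    have hv1 : (v 1 : ℝ) = (1 : ℝ) := by rw [h1, hc1, hd0]; ring
    funext i; fin_cases i
    · simpa using (by exact_mod_cast hv0 : v 0 = a)
    · simpa using (by exact_mod_cast hv1 : v 1 = 1)
  · right
    have hvb' : (b : ℝ) ≤ (v 1 : ℝ) := by exact_mod_cast hvb
    have hd1 : d = 1 := by nlinarith
    have hc0 : c = 0 := by linarith
    have hv0 : (v 0 : ℝ) = (1 : ℝ) := by rw [h0, hd1, hc0]; ring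
    have hv1 : (v 1 : ℝ) = (b : ℝ) := by rw [h1, hd1, hc0]; ring
    funext i; fin_cases i
    · simpa using (by exact_mod_cast hv0 : v 0 = 1)
    · simpa using (by exact_mod_cast hv1 : v 1 = b)

lemma gam1 (a b : ℕ) : ![a, 1] ∈ Gam a b := Or.inl ⟨by simp, by simp⟩

lemma gam2 (a b : ℕ) : ![1, b] ∈ Gam a b := Or.inr ⟨by simp, by simp⟩

/-- The candidate submonoid ℤ·v + ℕ². -/
def Smon (a b : ℕ) : AddSubmonoid (Fin 2 → ℤ) where
  carrier := {m | ∃ k : ℤ, ∃ w : Fin 2 → ℕ, m = k • vv a b + BS.natZ w}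
  zero_mem' := ⟨0, 0, by funext i; simp [BS.natZ]⟩
  add_mem' := by
    rintro x y ⟨k1, w1, rfl⟩ ⟨k2, w2, rfl⟩
    refine ⟨k1 + k2, w1 + w2, ?_⟩
    funext i
    simp [BS.natZ, Pi.add_apply, Pi.smul_apply, smul_eq_mul]
    push_cast
    ring

lemma mem_diff_iff (a b : ℕ) (ha : 2 ≤ a) (hb : 2 ≤ b) (m : Fin 2 → ℤ) :
    m ∈ BS.diffMonoid (Gam a b) (Qs a b) ↔
      ∃ k : ℤ, ∃ w : Fin 2 → ℕ, m = k • vv a b + BS.natZ w := by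
  constructor
  · intro hm
    have hsub : {d | ∃ u ∈ Gam a b, ∃ v ∈ Gam a b, BS.natR v ∈ Qs a b ∧
        d = BS.natZ u - BS.natZ v} ⊆ (Smon a b : Set (Fin 2 → ℤ)) := by
      rintro d ⟨u, hu, v, hv, hvQ, rfl⟩
      rcases gammaQ a b ha hb v hv hvQ with rfl | rfl <;>
        rcases hu with ⟨h1, h2⟩ | ⟨h1, h2⟩
      · exact ⟨0, ![u 0 - a, u 1 - 1], by
          funext i; fin_cases i <;>
            simp [vv, BS.natZ, Pi.add_apply, Pi.sub_apply, Pi.smul_apply, smul_eq_mul] <;> omega⟩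
      · exact ⟨-1, ![u 0 - 1, u 1 - b], by
          funext i; fin_cases i <;>
            simp [vv, BS.natZ, Pi.add_apply, Pi.sub_apply, Pi.smul_apply, smul_eq_mul] <;> omega⟩
      · exact ⟨1, ![u 0 - a, u 1 - 1], by
          funext i; fin_cases i <;>
            simp [vv, BS.natZ, Pi.add_apply, Pi.sub_apply, Pi.smul_apply, smul_eq_mul] <;> omega⟩
      · exact ⟨0, ![u 0 - 1, u 1 - b], by
          funext i; fin_cases i <;>
            simp [vv, BS.natZ, Pi.add_apply, Pi.sub_apply, Pi.smul_apply, smul_eq_mul] <;> omega⟩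
    exact (AddSubmonoid.closure_le.mpr hsub) hm
  · rintro ⟨k, w, rfl⟩
    have hvmem : vv a b ∈ BS.diffMonoid (Gam a b) (Qs a b) := by
      apply AddSubmonoid.subset_closure
      refine ⟨![a, 1], gam1 a b, ![1, b], gam2 a b, e2_mem a b, ?_⟩
      funext i; fin_cases i <;>
        simp [vv, BS.natZ, Pi.sub_apply]
    have hnmem : -vv a b ∈ BS.diffMonoid (Gam a b) (Qs a b) := by
      apply AddSubmonoid.subset_closure
      refine ⟨![1, b], gam2 a b, ![a, 1], gam1 a b, e1_mem a b, ?_⟩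
      funext i; fin_cases i <;>
        simp [vv, BS.natZ, Pi.sub_apply, Pi.neg_apply] <;> ring
    have hwmem : BS.natZ w ∈ BS.diffMonoid (Gam a b) (Qs a b) := by
      apply AddSubmonoid.subset_closure
      refine ⟨![a, 1] + w, Or.inl ⟨by simp, by simp⟩, ![a, 1], gam1 a b, e1_mem a b, ?_⟩
      funext i
      simp only [BS.natZ, Pi.add_apply, Pi.sub_apply]
      push_cast
      ring
    have hk : k • vv a b ∈ BS.diffMonoid (Gam a b) (Qs a b) := by
      rcases Int.eq_nat_or_neg k with ⟨n, rfl | rfl⟩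
      · rw [natCast_zsmul]
        exact AddSubmonoid.nsmul_mem _ hvmem n
      · rw [neg_zsmul, natCast_zsmul, ← smul_neg]
        exact AddSubmonoid.nsmul_mem _ hnmem n
    exact AddSubmonoid.add_mem _ hk hwmem

lemma mem_MQ_iff (a b : ℕ) (ha : 2 ≤ a) (hb : 2 ≤ b) (m : Fin 2 → ℤ) :
    m ∈ BS.MQ (Gam a b) (Qs a b) ↔
      ∃ k : ℤ, ∃ w : Fin 2 → ℕ, m = 1 + k • vv a b + BS.natZ w := by
  rw [BS.MQ, Set.mem_setOf_eq, mem_diff_iff a b ha hb]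
  constructor
  · rintro ⟨k, w, h⟩
    exact ⟨k, w, by rw [add_assoc, ← h]; abel⟩
  · rintro ⟨k, w, rfl⟩
    exact ⟨k, w, by abel⟩

lemma mem_VQ (a b : ℕ) (ha : 2 ≤ a) (hb : 2 ≤ b) (x : Fin 2 → ℝ) :
    x ∈ BS.VQ (Qs a b) := by
  have ha2 : (2 : ℝ) ≤ (a : ℝ) := by exact_mod_cast ha
  have hb2 : (2 : ℝ) ≤ (b : ℝ) := by exact_mod_cast hb
  have hd : (a : ℝ) * b - 1 ≠ 0 := by nlinarith
  have hP1 : (![(a : ℝ), 1] : Fin 2 → ℝ) ∈ BS.VQ (Qs a b) :=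
    Submodule.subset_span (left_mem_segment ℝ _ _)
  have hP2 : (![1, (b : ℝ)] : Fin 2 → ℝ) ∈ BS.VQ (Qs a b) :=
    Submodule.subset_span (right_mem_segment ℝ _ _)
  have hx : x = (((b : ℝ) * x 0 - x 1) / ((a : ℝ) * b - 1)) • ![(a : ℝ), 1]
      + (((a : ℝ) * x 1 - x 0) / ((a : ℝ) * b - 1)) • ![1, (b : ℝ)] := by
    funext i; fin_cases i <;>
      simp [Pi.add_apply, Pi.smul_apply, smul_eq_mul] <;> field_simp <;>
      rw [eq_div_iff (by rwa [mul_comm])] <;> ring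
  rw [hx]
  exact Submodule.add_mem _ (Submodule.smul_mem _ _ hP1) (Submodule.smul_mem _ _ hP2)

lemma descend_aux (A B s t : ℤ) (hA : 2 ≤ A) (hB : 2 ≤ B) :
    ∀ N : ℕ, ∀ k : ℤ, k * (A - 1) ≤ s → 0 ≤ t + k * (B - 1) → t + k * (B - 1) ≤ N →
    ∃ k' : ℤ, k' * (A - 1) ≤ s ∧ 0 ≤ t + k' * (B - 1) ∧ t + k' * (B - 1) ≤ B - 2 := by
  intro N
  induction N with
  | zero =>
    intro k h1 h2 h3
    exact ⟨k, h1, h2, by push_cast at h3; linarith⟩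
  | succ N ih =>
    intro k h1 h2 h3
    by_cases hle : t + k * (B - 1) ≤ B - 2
    · exact ⟨k, h1, h2, hle⟩
    · push_neg at hle
      have e1 : (k - 1) * (A - 1) = k * (A - 1) - (A - 1) := by ring
      have e2 : t + (k - 1) * (B - 1) = t + k * (B - 1) - (B - 1) := by ring
      push_cast at h3
      refine ih (k - 1) ?_ ?_ ?_
      · rw [e1]; linarith
      · rw [e2]; linarith
      · rw [e2]; linarith

lemma descend (A B s t : ℤ) (hA : 2 ≤ A) (hB : 2 ≤ B)
    (h : ∃ k : ℤ, k * (A - 1) ≤ s ∧ 0 ≤ t + k * (B - 1)) :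
    ∃ k : ℤ, k * (A - 1) ≤ s ∧ 0 ≤ t + k * (B - 1) ∧ t + k * (B - 1) ≤ B - 2 := by
  obtain ⟨k, h1, h2⟩ := h
  exact descend_aux A B s t hA hB (t + k * (B - 1)).toNat k h1 h2 (Int.self_le_toNat _)

end BSAux

/-- For a = (x^a y, x y^b), a, b ≥ 2, and the bounded face Q joining (a,1), (1,b):
R_Q = { -((b-1)i + (a-1)j)/(ab-1) : 1 ≤ i ≤ a, 1 ≤ j ≤ b }. -/
theorem example_xay_xyb (a b : ℕ) (ha : 2 ≤ a) (hb : 2 ≤ b)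
    (L : (Fin 2 → ℝ) →ₗ[ℝ] ℝ)
    (hL : ∀ x, L x = (((b : ℝ) - 1) * x 0 + ((a : ℝ) - 1) * x 1) / ((a : ℝ) * b - 1)) :
    BS.RQ {u : Fin 2 → ℕ | (a ≤ u 0 ∧ 1 ≤ u 1) ∨ (1 ≤ u 0 ∧ b ≤ u 1)}
      (segment ℝ ![(a : ℝ), 1] ![1, (b : ℝ)]) ![a, 1] L =
    {x : ℝ | ∃ i j : ℕ, 1 ≤ i ∧ i ≤ a ∧ 1 ≤ j ∧ j ≤ b ∧
      x = -((((b : ℝ) - 1) * i + ((a : ℝ) - 1) * j) / ((a : ℝ) * b - 1))} := by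
  have haZ : (2 : ℤ) ≤ (a : ℤ) := by exact_mod_cast ha
  have hbZ : (2 : ℤ) ≤ (b : ℤ) := by exact_mod_cast hb
  ext x
  simp only [BS.RQ, Set.mem_setOf_eq, Set.mem_diff]
  constructor
  · rintro ⟨u, ⟨huM, huM'⟩, -, hx⟩
    obtain ⟨k, w, huk⟩ := (BSAux.mem_MQ_iff a b ha hb u).mp huM
    have hu0 : u 0 = 1 + k * ((a : ℤ) - 1) + (w 0 : ℤ) := by
      have h := congrFun huk 0
      simpa [BSAux.vv, Pi.add_apply, Pi.smul_apply, smul_eq_mul, Pi.one_apply, BS.natZ,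
        Matrix.vecHead, Matrix.vecTail]
        using h
    have hu1 : u 1 = 1 + k * (1 - (b : ℤ)) + (w 1 : ℤ) := by
      have h := congrFun huk 1
      simpa [BSAux.vv, Pi.add_apply, Pi.smul_apply, smul_eq_mul, Pi.one_apply, BS.natZ,
        Matrix.vecHead, Matrix.vecTail]
        using h
    have hno : ∀ k' : ℤ,
        ¬ (k' * ((a : ℤ) - 1) ≤ u 0 - (a : ℤ) - 1 ∧ 2 - u 1 ≤ k' * ((b : ℤ) - 1)) := by
      rintro k' ⟨hA', hB'⟩
      apply huM'
      refine (BSAux.mem_MQ_iff a b ha hb _).mpr ⟨k',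
        ![(u 0 - (a : ℤ) - 1 - k' * ((a : ℤ) - 1)).toNat,
          (u 1 - 2 + k' * ((b : ℤ) - 1)).toNat], ?_⟩
      funext i
      fin_cases i
      · simp only [Pi.sub_apply, Pi.add_apply, Pi.smul_apply, smul_eq_mul, Pi.one_apply,
          BS.natZ, BSAux.vv, Matrix.cons_val_zero, Nat.cast_one, one_mul,
          Fin.isValue, Fin.zero_eta, Matrix.cons_val', Matrix.empty_val',
          Matrix.cons_val_fin_one]
        rw [Int.toNat_of_nonneg (by linarith)]
        push_cast
        ring
      · simp only [Pi.sub_apply, Pi.add_apply, Pi.smul_apply, smul_eq_mul, Pi.one_apply,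
          BS.natZ, BSAux.vv, Matrix.cons_val_one, Matrix.head_cons, Nat.cast_one, one_mul,
          Fin.isValue, Fin.mk_one, Matrix.cons_val', Matrix.empty_val',
          Matrix.cons_val_fin_one]
        rw [Int.toNat_of_nonneg (by linarith)]
        push_cast
        ring
    have hex : ∃ k0 : ℤ, k0 * ((a : ℤ) - 1) ≤ u 0 - 1 ∧
        0 ≤ (u 1 - 1) + k0 * ((b : ℤ) - 1) := by
      refine ⟨k, ?_, ?_⟩
      · have hw0 : (0 : ℤ) ≤ (w 0 : ℤ) := Int.natCast_nonneg _
        linarith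
      · have hw1 : (0 : ℤ) ≤ (w 1 : ℤ) := Int.natCast_nonneg _
        have e : k * (1 - (b : ℤ)) = -(k * ((b : ℤ) - 1)) := by ring
        rw [e] at hu1
        linarith
    obtain ⟨k0, hk1, hk2, hk3⟩ :=
      BSAux.descend ((a : ℤ)) ((b : ℤ)) (u 0 - 1) (u 1 - 1) haZ hbZ hex
    obtain ⟨p, q, hp0, hq0, hqB, hnpq, hp2A, hNN⟩ :
        ∃ p q : ℤ, 0 ≤ p ∧ 0 ≤ q ∧ q ≤ (b : ℤ) - 2 ∧ ¬((a : ℤ) ≤ p ∧ 1 ≤ q) ∧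
          p ≤ 2 * (a : ℤ) - 2 ∧
          ((b : ℤ) - 1) * (u 0) + ((a : ℤ) - 1) * (u 1)
            = ((b : ℤ) - 1) * (p + 1) + ((a : ℤ) - 1) * (q + 1) := by
      refine ⟨u 0 - 1 - k0 * ((a : ℤ) - 1), u 1 - 1 + k0 * ((b : ℤ) - 1),
        by linarith, hk2, hk3, ?_, ?_, by ring⟩
      · rintro ⟨hh1, hh2⟩
        exact hno k0 ⟨by linarith, by linarith⟩
      · by_contra hcon
        push_neg at hcon
        have e1 : (k0 + 1) * ((a : ℤ) - 1) = k0 * ((a : ℤ) - 1) + ((a : ℤ) - 1) := by ring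
        have e2 : (k0 + 1) * ((b : ℤ) - 1) = k0 * ((b : ℤ) - 1) + ((b : ℤ) - 1) := by ring
        exact hno (k0 + 1) ⟨by rw [e1]; linarith, by rw [e2]; linarith⟩
    have key : ∃ i j : ℕ, 1 ≤ i ∧ i ≤ a ∧ 1 ≤ j ∧ j ≤ b ∧
        ((b : ℤ) - 1) * (u 0) + ((a : ℤ) - 1) * (u 1)
          = ((b : ℤ) - 1) * (i : ℤ) + ((a : ℤ) - 1) * (j : ℤ) := by
      by_cases hq1 : 1 ≤ q
      · have hpA : p ≤ (a : ℤ) - 1 := by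
          by_contra h
          push_neg at h
          exact hnpq ⟨by linarith, hq1⟩
        refine ⟨(p + 1).toNat, (q + 1).toNat, by omega, by omega, by omega, by omega, ?_⟩
        rw [hNN, Int.toNat_of_nonneg (by linarith : (0 : ℤ) ≤ p + 1),
          Int.toNat_of_nonneg (by linarith : (0 : ℤ) ≤ q + 1)]
      · push_neg at hq1
        have hq0' : q = 0 := by omega
        subst hq0'
        by_cases hpA : p ≤ (a : ℤ) - 1
        · refine ⟨(p + 1).toNat, 1, by omega, by omega, le_refl 1, by omega, ?_⟩
          rw [hNN, Int.toNat_of_nonneg (by linarith : (0 : ℤ) ≤ p + 1)]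
          push_cast
          ring
        · push_neg at hpA
          refine ⟨(p - (a : ℤ) + 2).toNat, b, by omega, by omega, by omega, le_refl b, ?_⟩
          rw [hNN, Int.toNat_of_nonneg (by omega : (0 : ℤ) ≤ p - (a : ℤ) + 2)]
          push_cast
          ring
    obtain ⟨i, j, hi1, hia, hj1, hjb, hID⟩ := key
    refine ⟨i, j, hi1, hia, hj1, hjb, ?_⟩
    rw [hx, hL]
    have hIDR := congrArg (fun z : ℤ => (z : ℝ)) hID
    push_cast at hIDR
    simp only [BS.toR]
    rw [hIDR]
  · rintro ⟨i, j, hi1, hia, hj1, hjb, hxv⟩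
    refine ⟨![(i : ℤ), (j : ℤ)], ⟨?_, ?_⟩, BSAux.mem_VQ a b ha hb _, ?_⟩
    · refine (BSAux.mem_MQ_iff a b ha hb _).mpr ⟨0, ![i - 1, j - 1], ?_⟩
      funext idx
      fin_cases idx <;>
        simp [BSAux.vv, BS.natZ, Pi.add_apply, Pi.smul_apply, Pi.one_apply] <;>
        omega
    · intro hmem
      obtain ⟨k', w', hw'⟩ := (BSAux.mem_MQ_iff a b ha hb _).mp hmem
      have h0 := congrFun hw' 0
      have h1 := congrFun hw' 1
      simp only [Pi.sub_apply, Pi.add_apply, Pi.smul_apply, smul_eq_mul, Pi.one_apply,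
        BS.natZ, BSAux.vv, Matrix.cons_val_zero, Matrix.cons_val_one, Matrix.head_cons,
        Nat.cast_one, one_mul, Fin.isValue] at h0 h1
      have hw0 : (0 : ℤ) ≤ (w' 0 : ℤ) := Int.natCast_nonneg _
      have hw1 : (0 : ℤ) ≤ (w' 1 : ℤ) := Int.natCast_nonneg _
      have hiZ : (i : ℤ) ≤ (a : ℤ) := by exact_mod_cast hia
      have hjZ : (j : ℤ) ≤ (b : ℤ) := by exact_mod_cast hjb
      have hk'neg : k' ≤ -1 := by
        by_contra hc
        push_neg at hc
        have hk0 : (0 : ℤ) ≤ k' := by omega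
        have := mul_nonneg hk0 (by linarith : (0 : ℤ) ≤ (a : ℤ) - 1)
        linarith
      have hmul : k' * ((b : ℤ) - 1) ≤ (-1) * ((b : ℤ) - 1) :=
        mul_le_mul_of_nonneg_right hk'neg (by linarith)
      have e : k' * (1 - (b : ℤ)) = -(k' * ((b : ℤ) - 1)) := by ring
      rw [e] at h1
      linarith
    · rw [hL, hxv]
      simp only [BS.toR, Matrix.cons_val_zero, Matrix.cons_val_one, Matrix.head_cons]
      push_cast
      ring
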